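/- Let E be a real Banach space, r > 0, W := {x ∈ E : ‖x‖ < r}, and ε ∈ (0,1). Let η : E → E → E be a map such that for every c ∈ W: η c 0 = c, the map v ↦ η c v is Fréchet differentiable at every point of W, and ‖D(η c)(v) w − w‖ ≤ ε·‖w‖ for all v ∈ W and all w ∈ E. Fix u ∈ W and define the sequence x₀ := u and x_{m+1} := η x_m u. Then for every m ≥ 0, if x_i ∈ W for all 0 ≤ i < m, then ‖x_m‖ ≥ m·(1 − ε)·‖u‖. -/

import Mathlib

open Filter Set Topology

theorem stmt_14 {E : Type*} [NormedAddCommGroup E] [NormedSpace ℝ E] [CompleteSpace E]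
    (r : ℝ) (hr : 0 < r) (W : Set E) (hW : W = Metric.ball (0 : E) r)
    (ε : ℝ) (hε : ε ∈ Set.Ioo (0 : ℝ) 1)
    (η : E → E → E)
    (hη0 : ∀ c ∈ W, η c 0 = c)
    (hdiff : ∀ c ∈ W, ∀ v ∈ W, DifferentiableAt ℝ (η c) v)
    (hderiv : ∀ c ∈ W, ∀ v ∈ W, ∀ w : E, ‖fderiv ℝ (η c) v w - w‖ ≤ ε * ‖w‖)
    (u : E) (hu : u ∈ W)
    (x : ℕ → E) (hx0 : x 0 = u) (hxs : ∀ m : ℕ, x (m + 1) = η (x m) u) :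
    ∀ m : ℕ, (∀ i < m, x i ∈ W) → (m : ℝ) * (1 - ε) * ‖u‖ ≤ ‖x m‖ := by
  have h0W : (0 : E) ∈ W := by
    rw [hW]; simpa using hr
  have hεpos := hε.1
  -- key step estimate
  have key : ∀ c ∈ W, ‖η c u - u - c‖ ≤ ε * ‖u‖ := by
    intro c hc
    have hconv : Convex ℝ W := by rw [hW]; exact convex_ball 0 r
    set f : E → E := fun v => η c v - v with hf
    have hdf : ∀ v ∈ W, DifferentiableAt ℝ f v := fun v hv =>
      (hdiff c hc v hv).sub differentiableAt_id
    have hbound : ∀ v ∈ W, ‖fderiv ℝ f v‖ ≤ ε := by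
      intro v hv
      have : fderiv ℝ f v = fderiv ℝ (η c) v - ContinuousLinearMap.id ℝ E := by
        have := fderiv_sub (𝕜 := ℝ) (hdiff c hc v hv) (differentiableAt_id (x := v))
        simp [fderiv_id] at this; exact this
      rw [this]
      exact ContinuousLinearMap.opNorm_le_bound _ hεpos.le (fun w => by
        simpa using hderiv c hc v hv w)
    have := hconv.norm_image_sub_le_of_norm_fderiv_le hdf hbound h0W hu
    have h0 : f 0 = c := by simp [hf, hη0 c hc]
    calc ‖η c u - u - c‖ = ‖f u - f 0‖ := by rw [h0]
      _ ≤ ε * ‖u - 0‖ := this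
      _ = ε * ‖u‖ := by simp
  -- stronger claim
  have strong : ∀ m : ℕ, (∀ i < m, x i ∈ W) →
      ‖x m - ((m : ℝ) + 1) • u‖ ≤ (m : ℝ) * ε * ‖u‖ := by
    intro m
    induction m with
    | zero => intro _; simp [hx0]
    | succ n ih =>
      intro hmem
      have hxn : x n ∈ W := hmem n (Nat.lt_succ_self n)
      have hihs : ∀ i < n, x i ∈ W := fun i hi => hmem i (hi.trans (Nat.lt_succ_self n))
      have h1 := ih hihs
      have h2 := key (x n) hxn
      rw [hxs n]
      push_cast
      have heq : η (x n) u - ((n : ℝ) + 1 + 1) • u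
          = (η (x n) u - u - x n) + (x n - ((n : ℝ) + 1) • u) := by
        rw [add_smul, add_smul, one_smul]; abel
      rw [heq]
      calc ‖(η (x n) u - u - x n) + (x n - ((n : ℝ) + 1) • u)‖
            ≤ ‖η (x n) u - u - x n‖ + ‖x n - ((n : ℝ) + 1) • u‖ := norm_add_le _ _
        _ ≤ ε * ‖u‖ + (n : ℝ) * ε * ‖u‖ := add_le_add h2 h1
        _ = ((n : ℝ) + 1) * ε * ‖u‖ := by ring
  intro m hmem
  have h1 := strong m hmem
  have h2 : ‖((m : ℝ) + 1) • u‖ - ‖x m‖ ≤ (m : ℝ) * ε * ‖u‖ :=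
    le_trans (by simpa [norm_sub_rev] using norm_sub_norm_le (((m : ℝ) + 1) • u) (x m)) h1
  have h3 : ‖((m : ℝ) + 1) • u‖ = ((m : ℝ) + 1) * ‖u‖ := by
    rw [norm_smul]; simp [abs_of_nonneg (by positivity : (0:ℝ) ≤ (m : ℝ) + 1)]
  nlinarith [norm_nonneg u, norm_nonneg (x m)]
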